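/- In the Euclidean plane, consider an isosceles triangle with apex x̄, legs d(x̄,ȳ) = d(x̄,z̄) = 1, apex angle θ ∈ (0,π), and let w̄ be the midpoint of [ȳ,z̄]. For every ε > 0 there exists δ > 0 such that: if x̃, ỹ, z̃, w̃ are points in the Euclidean plane with d(x̃,ỹ) = 1, d(x̃,z̃) = 1, d(ỹ,w̃) = d(ȳ,w̄), d(w̃,z̃) = d(w̄,z̄), with z̃ and ỹ on opposite sides of the line through x̃ and w̃, with ∠w̃(x̃,ỹ) + ∠w̃(x̃,z̃) ≥ π, and with θ − δ ≤ ∠x̃(ỹ,z̃) ≤ θ, then d(x̄,w̄) − ε ≤ d(x̃,w̃). -/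

import Mathlib

open Real EuclideanGeometry

private lemma calx_sin_le_self {x : ℝ} (hx : 0 ≤ x) : Real.sin x ≤ x := by
  rcases eq_or_lt_of_le hx with h | h
  · simp [← h]
  · exact (Real.sin_lt h).le

private lemma calx_sin_abs_eq {x : ℝ} (h1 : -π ≤ x) (h2 : x ≤ π) :
    Real.sin |x| = |Real.sin x| := by
  rcases abs_cases x with ⟨hx, hx0⟩ | ⟨hx, hx0⟩
  · rw [hx, abs_of_nonneg (Real.sin_nonneg_of_nonneg_of_le_pi hx0 h2)]
  · rw [hx, Real.sin_neg, abs_of_nonpos (Real.sin_nonpos_of_nonpos_of_neg_pi_le hx0.le h1)]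

private lemma calx_mul_nonneg_of_sign_eq {x y : ℝ}
    (h : SignType.sign x = SignType.sign y) : 0 ≤ x * y := by
  rcases lt_trichotomy x 0 with hx | hx | hx
  · have hy : y < 0 := sign_eq_neg_one_iff.mp (h.symm.trans (sign_neg hx))
    nlinarith
  · simp [hx]
  · have hy : 0 < y := sign_eq_one_iff.mp (h.symm.trans (sign_pos hx))
    nlinarith

set_option maxHeartbeats 1000000 in
private lemma calx_endgame (θ ε s c k δ γ a : ℝ) (hθ0 : 0 < θ) (hθπ : θ < π) (hε : 0 < ε)
    (hs_def : s = Real.sin (θ/2))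
    (hs0 : 0 < s) (hc0 : 0 < c) (hpy : s^2 + c^2 = 1) (hs1 : s < 1)
    (hce : ε < c) (hk_def : k = ε * (2*c - ε)) (hk0 : 0 < k)
    (hδ0 : 0 < δ) (hδθ : δ ≤ θ/2) (hδs : δ ≤ s) (hδk : δ ≤ k^2/(8*c^2*s))
    (hγ1 : θ - δ ≤ γ) (hγ2 : γ ≤ θ) (hγ0 : 0 ≤ γ)
    (hac : a ≤ c) (ha0 : 0 ≤ a)
    (hkey : 4*a^2*Real.sin (γ/2)^2 = 4*a^2*s^2 - (a^2 - c^2)^2) :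
    c - ε ≤ a := by
  by_contra hcon
  push_neg at hcon
  have hka : k ≤ c^2 - a^2 := by nlinarith [pow_le_pow_left₀ ha0 hcon.le 2]
  have hsinγ : s - δ/2 ≤ Real.sin (γ/2) := by
    have hss := Real.sin_sub_sin (θ/2) (γ/2)
    have e1 : (θ/2 - γ/2)/2 = (θ-γ)/4 := by ring
    have e2 : (θ/2 + γ/2)/2 = (θ+γ)/4 := by ring
    rw [e1, e2, ← hs_def] at hss
    have ht0 : 0 ≤ (θ-γ)/4 := by linarith
    have ht1 : (θ-γ)/4 ≤ δ/4 := by linarith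
    have hsl : Real.sin ((θ-γ)/4) ≤ (θ-γ)/4 := calx_sin_le_self ht0
    have hsn : 0 ≤ Real.sin ((θ-γ)/4) :=
      Real.sin_nonneg_of_nonneg_of_le_pi ht0 (by linarith [Real.pi_pos])
    have hcl : Real.cos ((θ+γ)/4) ≤ 1 := Real.cos_le_one _
    have hprod : Real.sin ((θ-γ)/4) * Real.cos ((θ+γ)/4) ≤ Real.sin ((θ-γ)/4) * 1 :=
      mul_le_mul_of_nonneg_left hcl hsn
    linarith
  have hsγ0 : 0 ≤ s - δ/2 := by linarith
  have hsq : (s - δ/2)^2 ≤ Real.sin (γ/2)^2 := pow_le_pow_left₀ hsγ0 hsinγ 2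
  have hA1 : 4*a^2*(s-δ/2)^2 ≤ 4*a^2*Real.sin (γ/2)^2 :=
    mul_le_mul_of_nonneg_left hsq (by positivity)
  have hA2 : k^2 ≤ (c^2-a^2)^2 := pow_le_pow_left₀ hk0.le hka 2
  have hA3 : (a^2-c^2)^2 = (c^2-a^2)^2 := by ring
  have h5 : 4*a^2*(s-δ/2)^2 ≤ 4*a^2*s^2 - k^2 := by linarith [hkey]
  have hB : k^2 ≤ 4*a^2*s*δ := by nlinarith [h5, sq_nonneg (a*δ)]
  have haa : a^2 ≤ c^2 := pow_le_pow_left₀ ha0 hac 2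
  have hac2 : 0 ≤ (c^2 - a^2) * s * δ :=
    mul_nonneg (mul_nonneg (by linarith) hs0.le) hδ0.le
  have hB2 : 4*a^2*s*δ ≤ 4*c^2*s*δ := by nlinarith [hac2]
  have hB3 : 4*c^2*s*δ ≤ k^2/2 := by
    have h := mul_le_mul_of_nonneg_left hδk (show (0:ℝ) ≤ 4*c^2*s by positivity)
    calc 4*c^2*s*δ ≤ 4*c^2*s*(k^2/(8*c^2*s)) := h
      _ = k^2/2 := by field_simp; ring
  nlinarith [hk0]

/-- Key identity for the tilde configuration: with unit legs, half-base `s`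
(`s² + c² = 1`, `0 < s < 1`, `0 < c`), and opposite sides with large angle sum at `w̃`,
one has `d(x̃,w̃) ≤ c` and `4a²·sin²(γ/2) = 4a²s² − (a²−c²)²` where `a = d(x̃,w̃)`,
`γ = ∠x̃(ỹ,z̃)`. -/
private lemma calx_core (s c : ℝ) (hs0 : 0 < s) (hs1 : s < 1) (hc0 : 0 < c)
    (hpy : s^2 + c^2 = 1)
    (xt yt zt wt : EuclideanSpace ℝ (Fin 2))
    (hxy' : dist xt yt = 1) (hxz' : dist xt zt = 1)
    (hyw' : dist yt wt = s) (hwz' : dist wt zt = s)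
    (hside : (affineSpan ℝ ({xt, wt} : Set (EuclideanSpace ℝ (Fin 2)))).SOppSide yt zt)
    (hsum : π ≤ EuclideanGeometry.angle xt wt yt + EuclideanGeometry.angle xt wt zt) :
    dist xt wt ≤ c ∧
    4 * dist xt wt ^2 * Real.sin (EuclideanGeometry.angle yt xt zt / 2)^2
      = 4 * dist xt wt^2 * s^2 - (dist xt wt^2 - c^2)^2 := by
  haveI : Fact (Module.finrank ℝ (EuclideanSpace ℝ (Fin 2)) = 2) := ⟨finrank_euclideanSpace_fin⟩
  haveI : Module.Oriented ℝ (EuclideanSpace ℝ (Fin 2)) (Fin 2) :=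
    ⟨(EuclideanSpace.basisFun (Fin 2) ℝ).toBasis.orientation⟩
  set a := dist xt wt with ha_def
  set α := EuclideanGeometry.angle xt wt yt with hα_def
  set β := EuclideanGeometry.angle xt wt zt with hβ_def
  set γ := EuclideanGeometry.angle yt xt zt with hγ_def
  -- nondegeneracy
  have hxmem : xt ∈ affineSpan ℝ ({xt, wt} : Set (EuclideanSpace ℝ (Fin 2))) :=
    mem_affineSpan ℝ (Set.mem_insert _ _)
  have hwmem : wt ∈ affineSpan ℝ ({xt, wt} : Set (EuclideanSpace ℝ (Fin 2))) :=
    mem_affineSpan ℝ (Set.mem_insert_of_mem _ rfl)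
  have hynot : yt ∉ affineSpan ℝ ({xt, wt} : Set (EuclideanSpace ℝ (Fin 2))) := hside.2.1
  have hznot : zt ∉ affineSpan ℝ ({xt, wt} : Set (EuclideanSpace ℝ (Fin 2))) := hside.2.2
  have hywne : yt ≠ wt := fun h => hynot (h ▸ hwmem)
  have hzwne : zt ≠ wt := fun h => hznot (h ▸ hwmem)
  have hxwne : xt ≠ wt := by
    intro h
    have h1 : (1:ℝ) = s := by rw [← hxy', dist_comm, h, hyw']
    linarith
  have ha0 : 0 < a := dist_pos.2 hxwne
  -- law of cosines at wt
  have hα' : (1:ℝ) = a^2 + s^2 - 2*a*s*Real.cos α := by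
    have h := EuclideanGeometry.law_cos xt wt yt
    rw [hxy', hyw'] at h
    linear_combination h
  have hβ' : (1:ℝ) = a^2 + s^2 - 2*a*s*Real.cos β := by
    have h := EuclideanGeometry.law_cos xt wt zt
    rw [hxz', dist_comm zt wt, hwz'] at h
    linear_combination h
  have hcosαβ : Real.cos α = Real.cos β :=
    mul_left_cancel₀ (by positivity : (2*a*s : ℝ) ≠ 0) (by linarith)
  have hαβ : α = β := Real.injOn_cos ⟨angle_nonneg _ _ _, angle_le_pi _ _ _⟩
    ⟨angle_nonneg _ _ _, angle_le_pi _ _ _⟩ hcosαβ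
  have hαhalf : π/2 ≤ α := by linarith [hαβ]
  have hcosα_np : Real.cos α ≤ 0 :=
    Real.cos_nonpos_of_pi_div_two_le_of_le hαhalf
      (by linarith [angle_le_pi xt wt yt, Real.pi_pos])
  have hac : a ≤ c := by nlinarith [mul_nonpos_of_nonneg_of_nonpos (by positivity : (0:ℝ) ≤ 2*a*s) hcosα_np]
  refine ⟨hac, ?_⟩
  -- oriented angle bookkeeping
  have hsign1 : (∡ xt zt wt).sign = -(∡ xt yt wt).sign :=
    hside.oangle_sign_eq_neg hxmem hwmem
  have hsignA : (∡ yt wt xt).sign = (∡ xt yt wt).sign := oangle_rotate_sign xt yt wt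
  have hsignB : (∡ xt wt zt).sign = (∡ xt yt wt).sign := by
    rw [oangle_rev zt wt xt, Real.Angle.sign_neg, oangle_rotate_sign xt zt wt, hsign1, neg_neg]
  have hadd : ∡ yt wt xt + ∡ xt wt zt = ∡ yt wt zt := oangle_add hywne hxwne hzwne
  have hαA : α = |(∡ yt wt xt).toReal| := by
    rw [hα_def, angle_comm]
    exact angle_eq_abs_oangle_toReal hywne hxwne
  have hβB : β = |(∡ xt wt zt).toReal| := angle_eq_abs_oangle_toReal hxwne hzwne
  have hApi := Real.Angle.neg_pi_lt_toReal (∡ yt wt xt)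
  have hApi' := Real.Angle.toReal_le_pi (∡ yt wt xt)
  have hBpi := Real.Angle.neg_pi_lt_toReal (∡ xt wt zt)
  have hBpi' := Real.Angle.toReal_le_pi (∡ xt wt zt)
  have hsinprod : Real.sin (∡ yt wt xt).toReal * Real.sin (∡ xt wt zt).toReal
      = Real.sin α * Real.sin β := by
    have hs_eq : SignType.sign (Real.sin (∡ yt wt xt).toReal)
        = SignType.sign (Real.sin (∡ xt wt zt).toReal) := by
      have h := hsignA.trans hsignB.symm
      rwa [Real.Angle.sign, Real.Angle.sign, ← Real.Angle.sin_toReal, ← Real.Angle.sin_toReal] at h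
    have hmul := calx_mul_nonneg_of_sign_eq hs_eq
    rw [hαA, hβB, calx_sin_abs_eq hApi.le hApi', calx_sin_abs_eq hBpi.le hBpi', ← abs_mul,
      abs_of_nonneg hmul]
  have hcosA : Real.cos (∡ yt wt xt).toReal = Real.cos α := by rw [hαA, Real.cos_abs]
  have hcosB : Real.cos (∡ xt wt zt).toReal = Real.cos β := by rw [hβB, Real.cos_abs]
  have hcosyz : Real.cos (EuclideanGeometry.angle yt wt zt)
      = Real.cos α * Real.cos β - Real.sin α * Real.sin β := by
    rw [angle_eq_abs_oangle_toReal hywne hzwne, Real.cos_abs, ← hadd]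
    rw [show (∡ yt wt xt) + (∡ xt wt zt)
        = (((∡ yt wt xt).toReal + (∡ xt wt zt).toReal : ℝ) : Real.Angle) by
      rw [Real.Angle.coe_add, Real.Angle.coe_toReal, Real.Angle.coe_toReal]]
    rw [Real.Angle.cos_toReal, Real.Angle.cos_coe, Real.cos_add, hcosA, hcosB, hsinprod]
  -- law of cosines for the base yz, seen from wt and from xt
  have hyz_w : dist yt zt ^ 2 = 2*s^2 - 2*s^2*(Real.cos α * Real.cos β - Real.sin α * Real.sin β) := by
    have h := EuclideanGeometry.law_cos yt wt zt
    rw [hyw', dist_comm zt wt, hwz', hcosyz] at h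
    linear_combination h
  have hyz_x : dist yt zt ^ 2 = 2 - 2*Real.cos γ := by
    have h := EuclideanGeometry.law_cos yt xt zt
    rw [dist_comm yt xt, hxy', dist_comm zt xt, hxz'] at h
    linear_combination h
  have hγhalf : Real.cos γ = 1 - 2*Real.sin (γ/2)^2 := by
    have h2 : γ = 2*(γ/2) := by ring
    nth_rewrite 1 [h2]
    rw [Real.cos_two_mul]
    linear_combination 2 * Real.sin_sq_add_cos_sq (γ/2)
  have hpyα := Real.sin_sq_add_cos_sq α
  have hsin_sq : Real.sin (γ/2)^2 = s^2 - s^2 * Real.cos α^2 := by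
    rw [← hαβ] at hyz_w
    linear_combination (-1/4)*hyz_x + (1/4)*hyz_w + (1/2)*hγhalf + (s^2/2)*hpyα
  have hcos_eq : 2*a*s*Real.cos α = a^2 - c^2 := by linear_combination hα' + hpy
  linear_combination 4*a^2*hsin_sq - (2*a*s*Real.cos α + a^2 - c^2) * hcos_eq

theorem controlled_alexandrov_lemma (θ : ℝ) (hθ0 : 0 < θ) (hθπ : θ < π)
    (xb yb zb wb : EuclideanSpace ℝ (Fin 2))
    (hxy : dist xb yb = 1) (hxz : dist xb zb = 1)
    (hangle : EuclideanGeometry.angle yb xb zb = θ)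
    (hw : wb = midpoint ℝ yb zb) :
    ∀ ε : ℝ, 0 < ε → ∃ δ : ℝ, 0 < δ ∧
      ∀ xt yt zt wt : EuclideanSpace ℝ (Fin 2),
        dist xt yt = 1 → dist xt zt = 1 →
        dist yt wt = dist yb wb → dist wt zt = dist wb zb →
        (affineSpan ℝ ({xt, wt} : Set (EuclideanSpace ℝ (Fin 2)))).SOppSide yt zt →
        π ≤ EuclideanGeometry.angle xt wt yt + EuclideanGeometry.angle xt wt zt →
        θ - δ ≤ EuclideanGeometry.angle yt xt zt →
        EuclideanGeometry.angle yt xt zt ≤ θ →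
        dist xb wb - ε ≤ dist xt wt := by
  intro ε hε
  set s := Real.sin (θ/2) with hs_def
  set c := Real.cos (θ/2) with hc_def
  have hs0 : 0 < s := Real.sin_pos_of_pos_of_lt_pi (by linarith) (by linarith [Real.pi_pos])
  have hc0 : 0 < c := Real.cos_pos_of_mem_Ioo ⟨by linarith [Real.pi_pos], by linarith⟩
  have hpy : s^2 + c^2 = 1 := Real.sin_sq_add_cos_sq _
  have hs1 : s < 1 := by nlinarith
  have hcosθ : Real.cos θ = c^2 - s^2 := by
    have h2 : θ = 2*(θ/2) := by ring
    rw [h2, Real.cos_two_mul, ← hc_def]; linarith [hpy]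
  have hyz2 : dist yb zb ^ 2 = 2 - 2 * Real.cos θ := by
    have h := EuclideanGeometry.law_cos yb xb zb
    rw [dist_comm yb xb, dist_comm zb xb, hxy, hxz, hangle] at h
    linear_combination h
  have hyzb : dist yb zb = 2 * s := by
    rw [← Real.sqrt_sq (dist_nonneg (x := yb) (y := zb)), hyz2,
      ← Real.sqrt_sq (by positivity : (0:ℝ) ≤ 2*s)]
    congr 1
    nlinarith
  have hywb : dist yb wb = s := by
    rw [hw, dist_left_midpoint (𝕜 := ℝ), hyzb, Real.norm_two]; ring
  have hwzb : dist wb zb = s := by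
    rw [hw, dist_midpoint_right (𝕜 := ℝ), hyzb, Real.norm_two]; ring
  have hxwb : dist xb wb = c := by
    have hu : ‖yb -ᵥ xb‖ = 1 := by rw [← dist_eq_norm_vsub, dist_comm]; exact hxy
    have hv : ‖zb -ᵥ xb‖ = 1 := by rw [← dist_eq_norm_vsub, dist_comm]; exact hxz
    have hi : inner ℝ (yb -ᵥ xb) (zb -ᵥ xb) = Real.cos θ := by
      have h := InnerProductGeometry.cos_angle_mul_norm_mul_norm (yb -ᵥ xb) (zb -ᵥ xb)
      rw [hu, hv] at h
      have hang : InnerProductGeometry.angle (yb -ᵥ xb) (zb -ᵥ xb) = θ := hangle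
      rw [hang] at h
      simpa using h.symm
    have hvec : wb -ᵥ xb = (⅟2 : ℝ) • (yb -ᵥ xb) + (⅟2 : ℝ) • (zb -ᵥ xb) := by
      rw [hw]; exact midpoint_vsub yb zb xb
    have hn2 : dist xb wb ^ 2 = c^2 := by
      rw [dist_comm, dist_eq_norm_vsub (EuclideanSpace ℝ (Fin 2)), hvec, ← smul_add, norm_smul]
      have h12 : ‖(⅟2 : ℝ)‖ = 1/2 := by norm_num
      rw [h12, mul_pow, norm_add_sq_real, hu, hv, hi, hcosθ]
      nlinarith
    rw [← Real.sqrt_sq (dist_nonneg (x := xb) (y := wb)), hn2, Real.sqrt_sq hc0.le]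
  rw [hxwb]
  rcases le_or_gt c ε with hce | hce
  · exact ⟨1, one_pos, fun xt yt zt wt _ _ _ _ _ _ _ _ => by
      linarith [dist_nonneg (x := xt) (y := wt)]⟩
  · set k := ε * (2*c - ε) with hk_def
    have hk0 : 0 < k := by nlinarith
    refine ⟨min (min (θ/2) s) (k^2/(8*c^2*s)), by positivity, ?_⟩
    set δ := min (min (θ/2) s) (k^2/(8*c^2*s)) with hδ_def
    have hδ0 : 0 < δ := by positivity
    have hδθ : δ ≤ θ/2 := le_trans (min_le_left _ _) (min_le_left _ _)
    have hδs : δ ≤ s := le_trans (min_le_left _ _) (min_le_right _ _)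
    have hδk : δ ≤ k^2/(8*c^2*s) := min_le_right _ _
    intro xt yt zt wt hxy' hxz' hyw' hwz' hside hsum hγ1 hγ2
    rw [hywb] at hyw'
    rw [hwzb] at hwz'
    obtain ⟨hac, hkey⟩ := calx_core s c hs0 hs1 hc0 hpy xt yt zt wt hxy' hxz' hyw' hwz'
      hside hsum
    exact calx_endgame θ ε s c k δ (EuclideanGeometry.angle yt xt zt) (dist xt wt)
      hθ0 hθπ hε hs_def hs0 hc0 hpy hs1 hce hk_def hk0 hδ0 hδθ hδs hδk hγ1 hγ2
      (angle_nonneg _ _ _) hac dist_nonneg hkey
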